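/- arXiv:2112.00673 — 5 statements merged into one kernel-verified Lean document; each statement's English description precedes it below -/
import Mathlib

section
/- Let μ be a permutation of [n] with set T of non-fixed-points, |T| = t ≥ 1. Then there exists a subset I ⊆ T with |I| ≥ ⌈t/3⌉ such that I ∩ μ(I) = ∅. -/
open Finset

lemma aux8 (n : ℕ) (μ : Equiv.Perm (Fin n)) :
    ∀ k (T : Finset (Fin n)), T.card ≤ k → (∀ i ∈ T, μ i ≠ i) →
      ∃ I ⊆ T, (T.card + 2) / 3 ≤ I.card ∧ Disjoint I (I.image ⇑μ) := by
  intro k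
  induction k with
  | zero =>
    intro T hc _
    refine ⟨∅, empty_subset _, ?_, by simp⟩
    simp [Nat.le_zero.mp hc]
  | succ k ih =>
    intro T hc hnf
    rcases T.eq_empty_or_nonempty with rfl | ⟨i, hi⟩
    · exact ⟨∅, empty_subset _, by simp, by simp⟩
    · set S := (T.erase i).erase (μ i) |>.erase (μ.symm i) with hS
      have hSsub : S ⊆ T := by
        intro x hx
        exact mem_of_mem_erase (mem_of_mem_erase (mem_of_mem_erase hx))
      have hScard : T.card ≤ S.card + 3 := by
        have h1 : (T.erase i).card + 1 = T.card := card_erase_add_one hi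
        have h2 : (T.erase i).card ≤ ((T.erase i).erase (μ i)).card + 1 := by
          have := card_erase_le (s := T.erase i) (a := μ i)
          have := card_erase_lt_of_mem (s := T.erase i) (a := μ i)
          rcases Decidable.em (μ i ∈ T.erase i) with h | h
          · have := card_erase_add_one h; omega
          · rw [erase_eq_of_notMem h]; omega
        have h3 : ((T.erase i).erase (μ i)).card ≤ S.card + 1 := by
          rcases Decidable.em (μ.symm i ∈ (T.erase i).erase (μ i)) with h | h
          · rw [hS]; have := card_erase_add_one h; omega
          · rw [hS, erase_eq_of_notMem h]; omega
        omega
      have hSk : S.card ≤ k := by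
        have := card_le_card hSsub
        have h1 : S.card < T.card := by
          apply card_lt_card
          refine ⟨hSsub, fun h => ?_⟩
          have := h hi
          simp [hS] at this
        omega
      obtain ⟨I, hIS, hIcard, hIdisj⟩ := ih S hSk (fun x hx => hnf x (hSsub hx))
      have hiI : i ∉ I := fun h => by simp [hS] at hIS; have := hIS h; simp at this
      refine ⟨insert i I, ?_, ?_, ?_⟩
      · exact insert_subset hi (hIS.trans hSsub)
      · rw [card_insert_of_notMem hiI]
        omega
      · rw [disjoint_left]
        intro x hx hx2
        rw [mem_image] at hx2
        obtain ⟨y, hy, hyx⟩ := hx2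
        rw [mem_insert] at hx hy
        rcases hx with rfl | hx
        · rcases hy with rfl | hy
          · exact hnf _ hi hyx
          · -- x = μ y, y ∈ I ⊆ S, so y ≠ μ.symm x, contradiction
            have hyS := hIS hy
            have : y = μ.symm x := by rw [← hyx]; simp
            rw [hS] at hyS
            exact (ne_of_mem_erase hyS) this
        · rcases hy with rfl | hy
          · -- x ∈ I ⊆ S, x = μ y... here y = i, so x = μ i, but x ∈ S excludes μ i
            have hxS := hIS hx
            rw [hS] at hxS
            have := ne_of_mem_erase (mem_of_mem_erase hxS)
            exact this hyx.symm
          · exact (disjoint_left.mp hIdisj) hx (mem_image.mpr ⟨y, hy, hyx⟩)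

/-- For a permutation `μ` of `[n]` with set `T` of non-fixed-points, `|T| = t ≥ 1`, there is a
subset `I ⊆ T` with `|I| ≥ ⌈t/3⌉` such that `I ∩ μ(I) = ∅`. -/
theorem stmt8 (n : ℕ) (μ : Equiv.Perm (Fin n))
    (T : Finset (Fin n)) (hT : T = univ.filter (fun i => μ i ≠ i))
    (ht : 1 ≤ T.card) :
    ∃ I ⊆ T, (T.card + 2) / 3 ≤ I.card ∧ Disjoint I (I.image ⇑μ) := by
  apply aux8 n μ T.card T le_rfl
  intro i hi
  rw [hT, mem_filter] at hi
  exact hi.2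
end

section
/- A uniformly random n-vertex graph G = ([n], E), where E is a uniformly random subset of the set of unordered pairs of [n], is (n/20)-robustly self-ordered with probability 1 - exp(-Ω(n)). -/
open Finset

open scoped Classical


lemma indep_set {α : Type*} [DecidableEq α] (σ : Equiv.Perm α) :
    ∀ (M : Finset α), (∀ e ∈ M, σ e ≠ e) →
    ∃ M' ⊆ M, (∀ e ∈ M', σ e ∉ M') ∧ M.card ≤ 3 * M'.card := by
  intro M
  induction M using Finset.strongInduction with
  | _ M ih =>
    intro hfix
    rcases M.eq_empty_or_nonempty with rfl | ⟨x, hx⟩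
    · exact ⟨∅, by simp⟩
    · set R := M \ {x, σ x, σ.symm x} with hR
      have hRss : R ⊂ M := by
        rw [Finset.ssubset_iff_of_subset Finset.sdiff_subset]
        exact ⟨x, hx, by simp [hR]⟩
      obtain ⟨M'', hsub, hind, hcard⟩ := ih R hRss (fun e he => hfix e (mem_sdiff.mp he).1)
      refine ⟨insert x M'', ?_, ?_, ?_⟩
      · intro y hy
        rcases mem_insert.mp hy with rfl | hy
        · exact hx
        · exact (mem_sdiff.mp (hsub hy)).1
      · intro e he
        rcases mem_insert.mp he with rfl | he
        · intro hmem
          rcases mem_insert.mp hmem with h1 | h1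
          · exact hfix e hx h1.symm.symm
          · have h2 : σ e ∈ R := hsub h1
            rw [hR, mem_sdiff] at h2
            exact h2.2 (by simp)
        · intro hmem
          rcases mem_insert.mp hmem with h1 | h1
          · have h2 : e ∈ R := hsub he
            rw [hR, mem_sdiff] at h2
            refine h2.2 ?_
            have : e = σ.symm x := by rw [← h1]; simp
            simp [this]
          · exact hind e he h1
      · have hxnot : x ∉ M'' := fun h => (mem_sdiff.mp (hsub h)).2 (by simp)
        rw [Finset.card_insert_of_notMem hxnot]
        have h1 : M.card ≤ R.card + 3 := by
          have : M ⊆ R ∪ {x, σ x, σ.symm x} := by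
            intro y hy
            by_cases h : y ∈ ({x, σ x, σ.symm x} : Finset α)
            · exact Finset.mem_union_right _ h
            · exact Finset.mem_union_left _ (mem_sdiff.mpr ⟨hy, h⟩)
          calc M.card ≤ (R ∪ {x, σ x, σ.symm x}).card := Finset.card_le_card this
            _ ≤ R.card + ({x, σ x, σ.symm x} : Finset α).card := Finset.card_union_le _ _
            _ ≤ R.card + 3 := by
                have h3 : ({x, σ x, σ.symm x} : Finset α).card ≤ 3 := by
                  refine le_trans (Finset.card_insert_le _ _) ?_
                  have := Finset.card_insert_le (σ x) ({σ.symm x} : Finset α)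
                  simp at this ⊢; omega
                omega
        omega

lemma edge_count {n : ℕ} (μ : Equiv.Perm (Fin n)) :
    (univ.filter (fun v => μ v ≠ v)).card * (n - 2) ≤
      2 * (univ.filter (fun e : Sym2 (Fin n) => ¬e.IsDiag ∧ Sym2.map ⇑μ e ≠ e)).card := by
  set M := univ.filter (fun e : Sym2 (Fin n) => ¬e.IsDiag ∧ Sym2.map ⇑μ e ≠ e) with hM
  set P : Finset (Fin n × Fin n) :=
    univ.filter (fun p => μ p.1 ≠ p.1 ∧ p.2 ≠ p.1 ∧ Sym2.map ⇑μ s(p.1, p.2) ≠ s(p.1, p.2)) with hP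
  have hPM : P.card ≤ 2 * M.card := by
    apply Finset.card_le_mul_card_image_of_maps_to (f := fun p => s(p.1, p.2))
    · intro p hp
      rw [hP, mem_filter] at hp
      rw [hM, mem_filter]
      exact ⟨mem_univ _, by rw [Sym2.mk_isDiag_iff]; exact fun h => hp.2.2.1 h.symm, hp.2.2.2⟩
    · intro e he
      induction e using Sym2.ind with
      | _ a b =>
        have hsub : (P.filter fun p => s(p.1, p.2) = s(a, b)) ⊆ {(a,b), (b,a)} := by
          intro p hp
          rw [mem_filter] at hp
          rw [Sym2.eq_iff] at hp
          simp only [mem_insert, mem_singleton]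
          rcases hp.2 with ⟨h1, h2⟩ | ⟨h1, h2⟩
          · left; exact Prod.ext h1 h2
          · right; exact Prod.ext h1 h2
        calc (P.filter fun p => s(p.1, p.2) = s(a, b)).card ≤ ({(a,b),(b,a)} : Finset (Fin n × Fin n)).card :=
              Finset.card_le_card hsub
          _ ≤ 2 := by
              refine le_trans (Finset.card_insert_le _ _) ?_
              simp
  have hfib : P.card = ∑ v ∈ univ.filter (fun v => μ v ≠ v), (P.filter fun p => p.1 = v).card := by
    apply Finset.card_eq_sum_card_fiberwise
    intro p hp
    rw [hP, mem_coe, mem_filter] at hp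
    exact mem_filter.mpr ⟨mem_univ _, hp.2.1⟩
  have hlow : ∀ v ∈ univ.filter (fun v => μ v ≠ v), n - 2 ≤ (P.filter fun p => p.1 = v).card := by
    intro v hv
    have hv' : μ v ≠ v := (mem_filter.mp hv).2
    have himg : ((univ \ {v, μ v} : Finset (Fin n)).image fun u => (v, u)) ⊆
        P.filter fun p => p.1 = v := by
      intro p hp
      rw [Finset.mem_image] at hp
      obtain ⟨u, hu, rfl⟩ := hp
      rw [mem_sdiff] at hu
      have huv : u ≠ v := fun h => hu.2 (by simp [h])
      have huv2 : u ≠ μ v := fun h => hu.2 (by simp [h])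
      rw [mem_filter, hP, mem_filter]
      refine ⟨⟨mem_univ _, hv', huv, ?_⟩, rfl⟩
      simp only [Sym2.map_pair_eq]
      intro hcon
      rw [Sym2.eq_iff] at hcon
      rcases hcon with ⟨h1, h2⟩ | ⟨h1, h2⟩
      · exact hv' h1
      · exact huv2 h1.symm
    have hcard2 : n - 2 ≤ (univ \ {v, μ v} : Finset (Fin n)).card := by
      have h1 : ({v, μ v} : Finset (Fin n)).card ≤ 2 := by
        refine le_trans (Finset.card_insert_le _ _) ?_; simp
      rw [Finset.card_sdiff_of_subset (Finset.subset_univ _), Finset.card_univ, Fintype.card_fin]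
      omega
    calc n - 2 ≤ (univ \ {v, μ v} : Finset (Fin n)).card := hcard2
      _ = ((univ \ {v, μ v} : Finset (Fin n)).image fun u => (v, u)).card := by
          rw [Finset.card_image_of_injective _ (fun a b h => by simpa using h)]
      _ ≤ _ := Finset.card_le_card himg
  calc (univ.filter (fun v => μ v ≠ v)).card * (n - 2)
      = ∑ _v ∈ univ.filter (fun v => μ v ≠ v), (n - 2) := by
        rw [Finset.sum_const, smul_eq_mul]
    _ ≤ ∑ v ∈ univ.filter (fun v => μ v ≠ v), (P.filter fun p => p.1 = v).card :=
        Finset.sum_le_sum hlow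
    _ = P.card := hfib.symm
    _ ≤ 2 * M.card := hPM

lemma bad_card_le {n : ℕ} (μ : Equiv.Perm (Fin n)) (M' : Finset (Sym2 (Fin n)))
    (hsub : M' ⊆ univ.filter (fun e : Sym2 (Fin n) => ¬e.IsDiag))
    (hind : ∀ e ∈ M', Sym2.map ⇑μ e ∉ M') :
    ((univ.filter (fun e : Sym2 (Fin n) => ¬e.IsDiag)).powerset.filter
      (fun E => ((symmDiff E (E.image (Sym2.map ⇑μ))).card : ℝ) <
        ((n : ℝ)/20) * ((univ.filter (fun i => μ i ≠ i)).card : ℝ))).card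
    ≤ ((((univ.filter (fun e : Sym2 (Fin n) => ¬e.IsDiag)) \ M').powerset ×ˢ
        (M'.powerset.filter (fun B => 20 * B.card < n * (univ.filter (fun i => μ i ≠ i)).card))).card) := by
  set ND := univ.filter (fun e : Sym2 (Fin n) => ¬e.IsDiag) with hND
  set m := (univ.filter (fun i => μ i ≠ i)).card with hm
  have hinj : Function.Injective (Sym2.map ⇑μ) := Sym2.map.injective μ.injective
  apply Finset.card_le_card_of_injOn
      (fun E => (E \ M', M'.filter (fun e => ¬(e ∈ E ↔ Sym2.map ⇑μ e ∈ E))))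
  · -- maps to
    intro E hE
    rw [mem_coe, mem_filter, Finset.mem_powerset] at hE
    obtain ⟨hEND, hbad⟩ := hE
    rw [mem_coe, Finset.mem_product]
    constructor
    · rw [Finset.mem_powerset]
      exact Finset.sdiff_subset_sdiff hEND (le_refl _)
    · rw [mem_filter, Finset.mem_powerset]
      refine ⟨Finset.filter_subset _ _, ?_⟩
      -- card bound via injection into symmDiff
      have hcardle : (M'.filter (fun e => ¬(e ∈ E ↔ Sym2.map ⇑μ e ∈ E))).card ≤
          (symmDiff E (E.image (Sym2.map ⇑μ))).card := by
        apply Finset.card_le_card_of_injOn (Sym2.map ⇑μ)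
        · intro e he
          rw [mem_coe, mem_filter] at he
          rw [mem_coe, Finset.mem_symmDiff]
          have himg : Sym2.map ⇑μ e ∈ E.image (Sym2.map ⇑μ) ↔ e ∈ E := by
            constructor
            · intro h
              obtain ⟨a, ha, hae⟩ := Finset.mem_image.mp h
              rwa [← hinj hae]
            · exact fun h => Finset.mem_image_of_mem _ h
          by_cases h1 : e ∈ E
          · have h2 : Sym2.map ⇑μ e ∉ E := fun h => he.2 ⟨fun _ => h, fun _ => h1⟩
            right; exact ⟨himg.mpr h1, h2⟩
          · have h2 : Sym2.map ⇑μ e ∈ E := by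
              by_contra h2
              exact he.2 ⟨fun h => absurd h h1, fun h => absurd h h2⟩
            left; exact ⟨h2, fun h => h1 (himg.mp h)⟩
        · exact fun a _ b _ h => hinj h
      have : ((M'.filter (fun e => ¬(e ∈ E ↔ Sym2.map ⇑μ e ∈ E))).card : ℝ) < ((n:ℝ)/20) * m :=
        lt_of_le_of_lt (by exact_mod_cast hcardle) hbad
      have h20 : 20 * ((M'.filter (fun e => ¬(e ∈ E ↔ Sym2.map ⇑μ e ∈ E))).card : ℝ) < n * m := by
        nlinarith
      exact_mod_cast h20
  · -- injective
    intro E₁ hE₁ E₂ hE₂ heq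
    rw [mem_coe, mem_filter, Finset.mem_powerset] at hE₁ hE₂
    have h1 := congrArg Prod.fst heq
    have h2 := congrArg Prod.snd heq
    simp only at h1 h2
    ext e
    by_cases heM' : e ∈ M'
    · have hσ : Sym2.map ⇑μ e ∉ M' := hind e heM'
      have hσeq : (Sym2.map ⇑μ e ∈ E₁) ↔ (Sym2.map ⇑μ e ∈ E₂) := by
        constructor
        · intro h
          have : Sym2.map ⇑μ e ∈ E₁ \ M' := Finset.mem_sdiff.mpr ⟨h, hσ⟩
          rw [h1] at this
          exact (Finset.mem_sdiff.mp this).1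
        · intro h
          have : Sym2.map ⇑μ e ∈ E₂ \ M' := Finset.mem_sdiff.mpr ⟨h, hσ⟩
          rw [← h1] at this
          exact (Finset.mem_sdiff.mp this).1
      have hBeq : (¬(e ∈ E₁ ↔ Sym2.map ⇑μ e ∈ E₁)) ↔ (¬(e ∈ E₂ ↔ Sym2.map ⇑μ e ∈ E₂)) := by
        constructor
        · intro h
          have : e ∈ M'.filter (fun e => ¬(e ∈ E₁ ↔ Sym2.map ⇑μ e ∈ E₁)) :=
            mem_filter.mpr ⟨heM', h⟩
          rw [h2] at this
          exact (mem_filter.mp this).2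
        · intro h
          have : e ∈ M'.filter (fun e => ¬(e ∈ E₂ ↔ Sym2.map ⇑μ e ∈ E₂)) :=
            mem_filter.mpr ⟨heM', h⟩
          rw [← h2] at this
          exact (mem_filter.mp this).2
      constructor
      · intro h; by_contra h'; tauto
      · intro h; by_contra h'; tauto
    · constructor
      · intro h
        have : e ∈ E₁ \ M' := Finset.mem_sdiff.mpr ⟨h, heM'⟩
        rw [h1] at this
        exact (Finset.mem_sdiff.mp this).1
      · intro h
        have : e ∈ E₂ \ M' := Finset.mem_sdiff.mpr ⟨h, heM'⟩
        rw [← h1] at this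
        exact (Finset.mem_sdiff.mp this).1

-- L4: binomial tail
lemma tail_bound {α : Type*} [DecidableEq α] (s : Finset α) (t : ℕ) :
    (((s.powerset.filter (fun B => B.card ≤ t)).card : ℝ)) ≤ 2^t * (3/2)^s.card := by
  set K := s.card with hK
  have h1 : (s.powerset.filter (fun B => B.card ≤ t)) ⊆
      (range (t+1)).biUnion (fun d => s.powersetCard d) := by
    intro B hB
    rw [mem_filter, Finset.mem_powerset] at hB
    rw [Finset.mem_biUnion]
    exact ⟨B.card, Finset.mem_range.mpr (Nat.lt_succ_of_le hB.2),
      Finset.mem_powersetCard.mpr ⟨hB.1, rfl⟩⟩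
  have h2 : (s.powerset.filter (fun B => B.card ≤ t)).card ≤
      ∑ d ∈ range (t+1), K.choose d :=
    le_trans (Finset.card_le_card h1) (le_trans (Finset.card_biUnion_le)
      (by simp [Finset.card_powersetCard, hK]))
  have h3 : (∑ d ∈ range (t+1), (K.choose d : ℝ)) ≤ 2^t * (3/2)^K := by
    have hterm : ∀ d ∈ range (t+1), (K.choose d : ℝ) ≤ 2^t * ((K.choose d : ℝ) * (1/2)^d) := by
      intro d hd
      rw [mem_range] at hd
      have : (1:ℝ) ≤ 2^t * (1/2)^d := by
        rw [one_div, inv_pow, ← div_eq_mul_inv, le_div_iff₀ (by positivity)]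
        rw [one_mul]
        exact pow_le_pow_right₀ (by norm_num) (Nat.lt_succ_iff.mp hd)
      nlinarith [Nat.cast_nonneg (α := ℝ) (K.choose d)]
    calc (∑ d ∈ range (t+1), (K.choose d : ℝ))
        ≤ ∑ d ∈ range (t+1), 2^t * ((K.choose d : ℝ) * (1/2)^d) := Finset.sum_le_sum hterm
      _ = 2^t * ∑ d ∈ range (t+1), ((K.choose d : ℝ) * (1/2)^d) := by rw [Finset.mul_sum]
      _ ≤ 2^t * (3/2)^K := by
          apply mul_le_mul_of_nonneg_left _ (by positivity)
          have hext : (∑ d ∈ range (t+1), ((K.choose d : ℝ) * (1/2)^d)) ≤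
              ∑ d ∈ range (max t K + 1), ((K.choose d : ℝ) * (1/2)^d) := by
            apply Finset.sum_le_sum_of_subset_of_nonneg
            · exact Finset.range_subset_range.mpr (by omega)
            · intro i _ _; positivity
          have heq : (∑ d ∈ range (max t K + 1), ((K.choose d : ℝ) * (1/2)^d)) =
              ∑ d ∈ range (K+1), ((K.choose d : ℝ) * (1/2)^d) := by
            symm
            apply Finset.sum_subset (Finset.range_subset_range.mpr (by omega))
            intro d _ hd
            rw [mem_range] at hd
            rw [Nat.choose_eq_zero_of_lt (by omega)]
            simp
          have hpow : (∑ d ∈ range (K+1), ((K.choose d : ℝ) * (1/2)^d)) = (3/2)^K := by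
            have := add_pow (1/2 : ℝ) 1 K
            simp only [one_pow, mul_one] at this
            rw [show (3/2 : ℝ) = 1/2 + 1 by norm_num, this]
            apply Finset.sum_congr rfl
            intro d _; ring
          exact hext.trans_eq (heq.trans hpow)
  calc ((s.powerset.filter (fun B => B.card ≤ t)).card : ℝ)
      ≤ (∑ d ∈ range (t+1), (K.choose d : ℝ)) := by exact_mod_cast h2
    _ ≤ 2^t * (3/2)^K := h3
set_option maxHeartbeats 1000000 in

-- L5: numeric
lemma numeric_bound {n m K' t : ℕ} (hn : 10^8 ≤ n) (hK : m * (n - 2) ≤ 6 * K')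
    (ht : 20 * t ≤ n * m) :
    (2:ℝ)^t * (3/4)^K' ≤ ((999/1000 : ℝ)^n / (2 * (n:ℝ)^2))^m := by
  have hn2 : (2:ℕ) ≤ n := le_trans (by norm_num) hn
  have hnR : (10:ℝ)^8 ≤ (n:ℝ) := by exact_mod_cast hn
  have hnpos : (0:ℝ) < n := by positivity
  have hexp1 : (2.7182818283 : ℝ) < Real.exp 1 := Real.exp_one_gt_d9
  have hexp3 : (16:ℝ) ≤ Real.exp 3 := by
    have h3 : Real.exp 3 = Real.exp 1 * Real.exp 1 * Real.exp 1 := by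
      rw [← Real.exp_add, ← Real.exp_add]; norm_num
    nlinarith
  have hlog2 : Real.log 2 ≤ 3/4 := by
    have h16 : Real.log 16 ≤ 3 := by
      rw [Real.log_le_iff_le_exp (by norm_num)]; exact hexp3
    have : Real.log (16:ℝ) = 4 * Real.log 2 := by
      rw [show (16:ℝ) = 2^4 by norm_num, Real.log_pow]; norm_num
    linarith
  have hlog34 : Real.log (3/4 : ℝ) ≤ -(1/4) := by
    have := Real.log_le_sub_one_of_pos (show (0:ℝ) < 3/4 by norm_num)
    linarith
  have hlog999 : Real.log (999/1000 : ℝ) ≥ -(1/999) := by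
    have h := Real.log_le_sub_one_of_pos (show (0:ℝ) < 1000/999 by norm_num)
    have : Real.log (999/1000 : ℝ) = - Real.log (1000/999 : ℝ) := by
      rw [← Real.log_inv]; norm_num
    rw [this]; linarith
  have hlog10 : Real.log 10 ≤ 9 := by
    have := Real.log_le_sub_one_of_pos (show (0:ℝ) < 10 by norm_num)
    linarith
  have hlogn : Real.log (n:ℝ) ≤ (n:ℝ)/10^4 + 35 := by
    have hd : Real.log ((n:ℝ)/10^4) ≤ (n:ℝ)/10^4 - 1 :=
      Real.log_le_sub_one_of_pos (by positivity)
    have he : Real.log ((n:ℝ)/10^4) = Real.log (n:ℝ) - Real.log ((10:ℝ)^4) :=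
      Real.log_div (by positivity) (by positivity)
    have hf : Real.log ((10:ℝ)^4) ≤ 36 := by
      rw [Real.log_pow]; push_cast; linarith
    have he' : Real.log ((n:ℝ)/10^4) = Real.log (n:ℝ) - Real.log ((10:ℝ)^4) := by
      norm_num at he ⊢; convert he using 3 <;> norm_num
    norm_num at hd he' hf ⊢
    linarith
  -- positivity of both sides
  have hL : (0:ℝ) < (2:ℝ)^t * (3/4)^K' := by positivity
  have hR : (0:ℝ) < ((999/1000 : ℝ)^n / (2 * (n:ℝ)^2))^m := by positivity
  have eL : Real.log ((2:ℝ)^t * (3/4)^K') = t * Real.log 2 + K' * Real.log (3/4) := by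
    rw [Real.log_mul (by positivity) (by positivity), Real.log_pow, Real.log_pow]
  have eR : Real.log (((999/1000:ℝ)^n / (2*(n:ℝ)^2))^m) =
      m * ((n:ℝ) * Real.log (999/1000) - (Real.log 2 + 2 * Real.log (n:ℝ))) := by
    rw [Real.log_pow, Real.log_div (by positivity) (by positivity), Real.log_pow,
      Real.log_mul (by norm_num) (by positivity), Real.log_pow]
    norm_num
  rw [← Real.log_le_log_iff hL hR, eL, eR]
  -- goal: t * log 2 + K' * log (3/4) ≤ m * (n * log(999/1000) - (log 2 + 2 * log n))
  have htR : (t:ℝ) ≤ (n:ℝ) * m / 20 := by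
    have : (20:ℝ) * t ≤ (n:ℝ) * m := by exact_mod_cast ht
    linarith
  have hKR : (m:ℝ) * ((n:ℝ) - 2) / 6 ≤ (K' : ℝ) := by
    have h0 : ((m * (n-2) : ℕ) : ℝ) ≤ ((6 * K' : ℕ) : ℝ) := by exact_mod_cast hK
    rw [Nat.cast_mul, Nat.cast_mul, Nat.cast_sub hn2] at h0
    push_cast at h0 ⊢
    linarith
  have hm0 : (0:ℝ) ≤ (m:ℝ) := Nat.cast_nonneg m
  have h1 : (t:ℝ) * Real.log 2 ≤ ((n:ℝ) * m / 20) * (3/4) := by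
    have hl2 : (0:ℝ) ≤ Real.log 2 := Real.log_nonneg (by norm_num)
    calc (t:ℝ) * Real.log 2 ≤ ((n:ℝ) * m / 20) * Real.log 2 := by
          apply mul_le_mul_of_nonneg_right htR hl2
      _ ≤ ((n:ℝ) * m / 20) * (3/4) := by
          apply mul_le_mul_of_nonneg_left hlog2; positivity
  have h2 : (K':ℝ) * Real.log (3/4) ≤ ((m:ℝ) * ((n:ℝ) - 2) / 6) * (-(1/4)) := by
    have hKnn : (0:ℝ) ≤ (m:ℝ) * ((n:ℝ) - 2) / 6 := by
      have h2n : (2:ℝ) ≤ (n:ℝ) := by exact_mod_cast hn2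
      nlinarith
    calc (K':ℝ) * Real.log (3/4) ≤ ((m:ℝ) * ((n:ℝ) - 2) / 6) * Real.log (3/4) := by
          apply mul_le_mul_of_nonpos_right hKR (by linarith)
      _ ≤ ((m:ℝ) * ((n:ℝ) - 2) / 6) * (-(1/4)) := by
          apply mul_le_mul_of_nonneg_left hlog34 hKnn
  have h3 : (m:ℝ) * ((-(1/999)) * n - (3/4 + 2 * ((n:ℝ)/10^4 + 35))) ≤
      (m:ℝ) * ((n:ℝ) * Real.log (999/1000) - (Real.log 2 + 2 * Real.log (n:ℝ))) := by
    apply mul_le_mul_of_nonneg_left _ hm0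
    have hlognn : (0:ℝ) ≤ Real.log n := Real.log_nonneg (by linarith)
    nlinarith [hlog999, hlog2, hlogn, hnpos]
  calc (t:ℝ) * Real.log 2 + (K':ℝ) * Real.log (3/4)
      ≤ ((n:ℝ) * m / 20) * (3/4) + ((m:ℝ) * ((n:ℝ) - 2) / 6) * (-(1/4)) := by
        exact add_le_add h1 h2
    _ ≤ (m:ℝ) * ((-(1/999)) * n - (3/4 + 2 * ((n:ℝ)/10^4 + 35))) := by nlinarith
    _ ≤ (m:ℝ) * ((n:ℝ) * Real.log (999/1000) - (Real.log 2 + 2 * Real.log (n:ℝ))) := h3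

lemma perm_count (n k : ℕ) :
    ((univ.filter (fun μ : Equiv.Perm (Fin n) =>
        (univ.filter (fun v => μ v ≠ v)).card = k)).card) ≤ n.choose k * n ^ k := by
  classical
  set T := (univ.powersetCard k (α := Fin n)).biUnion
      (fun S => Fintype.piFinset (fun v => if v ∈ S then (univ : Finset (Fin n)) else {v})) with hT
  have hmaps : ∀ μ ∈ (univ.filter (fun μ : Equiv.Perm (Fin n) =>
      (univ.filter (fun v => μ v ≠ v)).card = k)), ⇑μ ∈ T := by
    intro μ hμ
    rw [mem_filter] at hμ
    rw [hT, Finset.mem_biUnion]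
    refine ⟨univ.filter (fun v => μ v ≠ v), Finset.mem_powersetCard.mpr ⟨Finset.subset_univ _, hμ.2⟩, ?_⟩
    rw [Fintype.mem_piFinset]
    intro v
    by_cases hv : v ∈ univ.filter (fun v => μ v ≠ v)
    · simp [hv]
    · have : μ v = v := by
        by_contra h
        exact hv (mem_filter.mpr ⟨mem_univ _, h⟩)
      simp [hv, this]
  have hinj : Set.InjOn (fun μ : Equiv.Perm (Fin n) => ⇑μ)
      ((univ.filter (fun μ : Equiv.Perm (Fin n) =>
        (univ.filter (fun v => μ v ≠ v)).card = k)) : Set (Equiv.Perm (Fin n))) := by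
    intro a _ b _ h
    exact Equiv.coe_fn_injective h
  have h1 := Finset.card_le_card_of_injOn _ hmaps hinj
  have h2 : T.card ≤ n.choose k * n ^ k := by
    calc T.card ≤ ∑ S ∈ univ.powersetCard k (α := Fin n),
        (Fintype.piFinset (fun v => if v ∈ S then (univ : Finset (Fin n)) else {v})).card :=
          Finset.card_biUnion_le
      _ = ∑ S ∈ univ.powersetCard k (α := Fin n), n ^ k := by
          apply Finset.sum_congr rfl
          intro S hS
          rw [Fintype.card_piFinset]
          have : ∀ v : Fin n, (if v ∈ S then (univ : Finset (Fin n)) else {v}).card =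
              (if v ∈ S then n else 1) := by
            intro v; split <;> simp
          rw [Finset.prod_congr rfl (fun v _ => this v)]
          rw [Finset.prod_ite_mem univ S (fun _ => n), Finset.univ_inter, Finset.prod_const,
            (Finset.mem_powersetCard.mp hS).2]
      _ = n.choose k * n ^ k := by
          rw [Finset.sum_const, smul_eq_mul, Finset.card_powersetCard, Finset.card_univ,
            Fintype.card_fin]
  exact le_trans h1 h2

set_option maxHeartbeats 1000000 in
lemma per_mu {n : ℕ} (hn : 10^8 ≤ n) (μ : Equiv.Perm (Fin n)) :
    (((univ.filter (fun e : Sym2 (Fin n) => ¬e.IsDiag)).powerset.filter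
      (fun E => ((symmDiff E (E.image (Sym2.map ⇑μ))).card : ℝ) <
        ((n : ℝ)/20) * ((univ.filter (fun i => μ i ≠ i)).card : ℝ))).card : ℝ)
    ≤ (2:ℝ)^((univ.filter (fun e : Sym2 (Fin n) => ¬e.IsDiag)).card) *
        ((999/1000 : ℝ)^n / (2 * (n:ℝ)^2))^((univ.filter (fun i => μ i ≠ i)).card) := by
  classical
  set ND := univ.filter (fun e : Sym2 (Fin n) => ¬e.IsDiag) with hND
  set m := (univ.filter (fun i => μ i ≠ i)).card with hm
  set M := univ.filter (fun e : Sym2 (Fin n) => ¬e.IsDiag ∧ Sym2.map ⇑μ e ≠ e) with hMdef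
  have hσ'inv : ∀ e : Sym2 (Fin n), Sym2.map ⇑μ.symm (Sym2.map ⇑μ e) = e := by
    intro e; induction e using Sym2.ind with | _ a b => simp
  have hσ'inv2 : ∀ e : Sym2 (Fin n), Sym2.map ⇑μ (Sym2.map ⇑μ.symm e) = e := by
    intro e; induction e using Sym2.ind with | _ a b => simp
  set σ' : Equiv.Perm (Sym2 (Fin n)) :=
    ⟨Sym2.map ⇑μ, Sym2.map ⇑μ.symm, hσ'inv, hσ'inv2⟩ with hσ'
  have hσ'coe : ∀ e, σ' e = Sym2.map ⇑μ e := fun _ => rfl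
  obtain ⟨M', hsubM, hind, hcard3⟩ := indep_set σ' M (fun e he => by
    rw [hσ'coe]; exact ((mem_filter.mp he).2).2)
  set K' := M'.card with hK'
  have hsubND : M' ⊆ ND := by
    intro e he
    have := hsubM he
    rw [hMdef, mem_filter] at this
    rw [hND, mem_filter]
    exact ⟨this.1, this.2.1⟩
  have hK'D : K' ≤ ND.card := by rw [hK']; exact Finset.card_le_card hsubND
  have hind' : ∀ e ∈ M', Sym2.map ⇑μ e ∉ M' := fun e he => hind e he
  have h1 := bad_card_le μ M' hsubND hind'
  set t := n * m / 20 with htdef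
  have hBsub : (M'.powerset.filter (fun B => 20 * B.card < n * m)) ⊆
      (M'.powerset.filter (fun B => B.card ≤ t)) := by
    intro B hB
    rw [mem_filter] at hB ⊢
    refine ⟨hB.1, ?_⟩
    rw [htdef, Nat.le_div_iff_mul_le (by norm_num)]
    omega
  have hprod : ((((ND \ M').powerset ×ˢ
      (M'.powerset.filter (fun B => 20 * B.card < n * m))).card) : ℝ) ≤
      (2:ℝ)^(ND.card - K') * (2^t * (3/2)^K') := by
    rw [Finset.card_product, Finset.card_powerset, Finset.card_sdiff_of_subset hsubND]
    push_cast
    apply mul_le_mul_of_nonneg_left _ (by positivity)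
    calc (((M'.powerset.filter (fun B => 20 * B.card < n * m)).card) : ℝ)
        ≤ (((M'.powerset.filter (fun B => B.card ≤ t)).card) : ℝ) := by
          exact_mod_cast Finset.card_le_card hBsub
      _ ≤ 2^t * (3/2)^M'.card := tail_bound M' t
  have hKK : m * (n - 2) ≤ 6 * K' := by
    have h2 := edge_count μ
    rw [← hMdef, ← hm] at h2
    omega
  have ht20 : 20 * t ≤ n * m := by
    rw [htdef, mul_comm]
    exact Nat.div_mul_le_self _ _
  have hnum := numeric_bound hn hKK ht20
  have heq : (2:ℝ)^(ND.card - K') * (2^t * (3/2)^K') =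
      (2:ℝ)^ND.card * (2^t * (3/4)^K') := by
    rw [show (3/2:ℝ) = 3/4 * 2 by norm_num, mul_pow, ← pow_sub_mul_pow (2:ℝ) hK'D]
    ring
  calc (((ND.powerset.filter
      (fun E => ((symmDiff E (E.image (Sym2.map ⇑μ))).card : ℝ) < ((n : ℝ)/20) * (m : ℝ))).card : ℝ))
      ≤ ((((ND \ M').powerset ×ˢ
          (M'.powerset.filter (fun B => 20 * B.card < n * m))).card) : ℝ) := by
        exact_mod_cast h1
    _ ≤ (2:ℝ)^(ND.card - K') * (2^t * (3/2)^K') := hprod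
    _ = (2:ℝ)^ND.card * (2^t * (3/4)^K') := heq
    _ ≤ (2:ℝ)^ND.card * ((999/1000 : ℝ)^n / (2 * (n:ℝ)^2))^m := by
        apply mul_le_mul_of_nonneg_left hnum (by positivity)


set_option maxHeartbeats 2000000 in
/-- A uniformly random `n`-vertex graph (each of the `C(n,2)` potential edges present
independently with probability `1/2`) is `(n/20)`-robustly self-ordered with probability
`1 - exp(-Ω(n))`: the fraction of edge sets violating this is at most `exp(-c·n)`. -/
theorem stmt9 : ∃ c : ℝ, 0 < c ∧ ∃ N : ℕ, ∀ n : ℕ, N ≤ n →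
    (((Finset.univ.filter (fun e : Sym2 (Fin n) => ¬ e.IsDiag)).powerset.filter
        (fun E => ¬ ∀ μ : Equiv.Perm (Fin n),
          ((n : ℝ) / 20) * ((univ.filter (fun i => μ i ≠ i)).card : ℝ) ≤
            ((symmDiff E (E.image (Sym2.map ⇑μ))).card : ℝ))).card : ℝ) ≤
      Real.exp (-c * n) *
        ((Finset.univ.filter (fun e : Sym2 (Fin n) => ¬ e.IsDiag)).powerset.card : ℝ) := by
  classical
  refine ⟨Real.log (1000/999), Real.log_pos (by norm_num), 10^8, ?_⟩
  intro n hn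
  set ND := univ.filter (fun e : Sym2 (Fin n) => ¬e.IsDiag) with hND
  set D := ND.card with hD
  set q : ℝ := 999/1000 with hq
  set Bad : Equiv.Perm (Fin n) → Finset (Finset (Sym2 (Fin n))) := fun μ =>
    ND.powerset.filter (fun E => ((symmDiff E (E.image (Sym2.map ⇑μ))).card : ℝ) <
      ((n : ℝ)/20) * ((univ.filter (fun i => μ i ≠ i)).card : ℝ)) with hBad
  set mc : Equiv.Perm (Fin n) → ℕ := fun μ => (univ.filter (fun i => μ i ≠ i)).card with hmc
  -- global bad set is inside the union of the Bad μ
  have hGBsub : (ND.powerset.filter (fun E => ¬ ∀ μ : Equiv.Perm (Fin n),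
        ((n : ℝ) / 20) * ((univ.filter (fun i => μ i ≠ i)).card : ℝ) ≤
          ((symmDiff E (E.image (Sym2.map ⇑μ))).card : ℝ)))
      ⊆ univ.biUnion Bad := by
    intro E hE
    rw [mem_filter] at hE
    push_neg at hE
    obtain ⟨hEp, μ, hμ⟩ := hE
    exact Finset.mem_biUnion.mpr ⟨μ, mem_univ _, mem_filter.mpr ⟨hEp, hμ⟩⟩
  have hcard1 : ((ND.powerset.filter (fun E => ¬ ∀ μ : Equiv.Perm (Fin n),
        ((n : ℝ) / 20) * ((univ.filter (fun i => μ i ≠ i)).card : ℝ) ≤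
          ((symmDiff E (E.image (Sym2.map ⇑μ))).card : ℝ))).card : ℝ)
      ≤ ∑ μ : Equiv.Perm (Fin n), ((Bad μ).card : ℝ) := by
    have h1 := Finset.card_le_card hGBsub
    have h2 := Finset.card_biUnion_le (s := (univ : Finset (Equiv.Perm (Fin n)))) (t := Bad)
    have := le_trans h1 h2
    exact_mod_cast this
  -- small-support permutations are trivial
  have hsmall : ∀ μ : Equiv.Perm (Fin n), mc μ ≤ 1 → (univ.filter (fun v => μ v ≠ v)) = ∅ := by
    intro μ hμ
    by_contra hne
    obtain ⟨v, hv⟩ := Finset.nonempty_of_ne_empty hne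
    have hv' : μ v ≠ v := (mem_filter.mp hv).2
    have hμv : μ (μ v) ≠ μ v := fun h => hv' (μ.injective h)
    have hsub2 : ({v, μ v} : Finset (Fin n)) ⊆ univ.filter (fun v => μ v ≠ v) := by
      intro w hw
      rcases Finset.mem_insert.mp hw with rfl | hw
      · exact hv
      · rw [Finset.mem_singleton] at hw
        subst hw
        exact mem_filter.mpr ⟨mem_univ _, hμv⟩
    have h2 : 2 ≤ mc μ := by
      have hcc : ({v, μ v} : Finset (Fin n)).card = 2 := by
        rw [Finset.card_insert_of_notMem (by simpa using hv'.symm), Finset.card_singleton]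
      calc 2 = ({v, μ v} : Finset (Fin n)).card := hcc.symm
        _ ≤ _ := Finset.card_le_card hsub2
    omega
  have hBad1 : ∀ μ : Equiv.Perm (Fin n), mc μ ≤ 1 → Bad μ = ∅ := by
    intro μ hμ
    have hf := hsmall μ hμ
    have hmc0 : mc μ = 0 := by rw [hmc]; simp only at hf ⊢; rw [hf]; rfl
    rw [hBad, Finset.filter_eq_empty_iff]
    intro E _
    rw [hf]
    push_neg
    simp
  -- fiberwise sum over support size
  have hmaps : ∀ μ ∈ (univ : Finset (Equiv.Perm (Fin n))), mc μ ∈ range (n+1) := by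
    intro μ _
    rw [mem_range, Nat.lt_succ_iff]
    calc mc μ ≤ (univ : Finset (Fin n)).card := Finset.card_le_card (Finset.filter_subset _ _)
      _ = n := by rw [Finset.card_univ, Fintype.card_fin]
  have hfib : (∑ μ : Equiv.Perm (Fin n), ((Bad μ).card : ℝ)) =
      ∑ k ∈ range (n+1), ∑ μ ∈ univ.filter (fun μ : Equiv.Perm (Fin n) => mc μ = k),
        ((Bad μ).card : ℝ) :=
    (Finset.sum_fiberwise_of_maps_to hmaps _).symm
  set x : ℝ := q^n / 2 with hx
  have hqn1 : q^n ≤ 1 := pow_le_one₀ (by norm_num) (by norm_num)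
  have hqnpos : 0 < q^n := by positivity
  have hqhalf : q^n ≤ 1/2 := by
    have hb : (1 + (n:ℝ) * (1/999)) ≤ (1 + 1/999)^n := one_add_mul_le_pow (by norm_num) n
    have hn' : (10:ℝ)^8 ≤ (n:ℝ) := by exact_mod_cast hn
    have h2le : (2:ℝ) ≤ (1000/999)^n := by
      have : (1 + 1/999 : ℝ) = 1000/999 := by norm_num
      rw [← this]
      nlinarith
    have hinv : ((1000/999 : ℝ)^n)⁻¹ ≤ 2⁻¹ := inv_anti₀ (by norm_num) h2le
    have heq : q^n = ((1000/999 : ℝ)^n)⁻¹ := by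
      rw [← inv_pow]; norm_num [hq]
    rw [heq]
    linarith
  have hxhalf : x ≤ 1/2 := by rw [hx]; linarith
  have hxpos : 0 < x := by positivity
  -- bound each fiber
  have hfiber_bound : ∀ k ∈ range (n+1),
      (∑ μ ∈ univ.filter (fun μ : Equiv.Perm (Fin n) => mc μ = k), ((Bad μ).card : ℝ))
      ≤ (2:ℝ)^D * (4 * x^2 * (1/2)^k) := by
    intro k _
    by_cases hk : k ≤ 1
    · have : ∀ μ ∈ univ.filter (fun μ : Equiv.Perm (Fin n) => mc μ = k),
          ((Bad μ).card : ℝ) = 0 := by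
        intro μ hμ
        rw [mem_filter] at hμ
        rw [hBad1 μ (by omega)]
        simp
      rw [Finset.sum_congr rfl this, Finset.sum_const, smul_zero]
      positivity
    · push_neg at hk
      have hsum1 : (∑ μ ∈ univ.filter (fun μ : Equiv.Perm (Fin n) => mc μ = k),
          ((Bad μ).card : ℝ))
          ≤ ∑ μ ∈ univ.filter (fun μ : Equiv.Perm (Fin n) => mc μ = k),
            (2:ℝ)^D * (q^n / (2 * (n:ℝ)^2))^k := by
        apply Finset.sum_le_sum
        intro μ hμ
        rw [mem_filter] at hμ
        calc ((Bad μ).card : ℝ)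
            ≤ (2:ℝ)^D * ((999/1000 : ℝ)^n / (2 * (n:ℝ)^2))^((univ.filter (fun i => μ i ≠ i)).card) :=
              per_mu hn μ
          _ = (2:ℝ)^D * (q^n / (2 * (n:ℝ)^2))^k := by
              have hk2 : (univ.filter (fun i => μ i ≠ i)).card = k := hμ.2
              rw [hk2, hq]
      have hcount : ((univ.filter (fun μ : Equiv.Perm (Fin n) => mc μ = k)).card : ℝ)
          ≤ (n:ℝ)^k * (n:ℝ)^k := by
        have h := perm_count n k
        have hch : ((n.choose k : ℕ) : ℝ) ≤ (n:ℝ)^k := by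
          calc ((n.choose k : ℕ) : ℝ) ≤ (n:ℝ)^k / (k.factorial : ℝ) := Nat.choose_le_pow_div k n
            _ ≤ (n:ℝ)^k := by
              apply div_le_self (by positivity)
              exact_mod_cast Nat.one_le_iff_ne_zero.mpr (Nat.factorial_ne_zero k)
        calc ((univ.filter (fun μ : Equiv.Perm (Fin n) => mc μ = k)).card : ℝ)
            ≤ ((n.choose k * n ^ k : ℕ) : ℝ) := by exact_mod_cast h
          _ = ((n.choose k : ℕ) : ℝ) * (n:ℝ)^k := by push_cast; ring
          _ ≤ (n:ℝ)^k * (n:ℝ)^k := by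
              apply mul_le_mul_of_nonneg_right hch (by positivity)
      have hnn : (0:ℝ) < (n:ℝ) := by
        have : (10:ℝ)^8 ≤ (n:ℝ) := by exact_mod_cast hn
        linarith
      have hsum2 : (∑ μ ∈ univ.filter (fun μ : Equiv.Perm (Fin n) => mc μ = k),
          (2:ℝ)^D * (q^n / (2 * (n:ℝ)^2))^k)
          = ((univ.filter (fun μ : Equiv.Perm (Fin n) => mc μ = k)).card : ℝ) *
            ((2:ℝ)^D * (q^n / (2 * (n:ℝ)^2))^k) := by
        rw [Finset.sum_const, nsmul_eq_mul]
      have hxk : ((n:ℝ)^k * (n:ℝ)^k) * (q^n / (2 * (n:ℝ)^2))^k = x^k := by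
        rw [hx, ← mul_pow, ← mul_pow]
        congr 1
        field_simp
      have hxk_le : x^k ≤ 4 * x^2 * (1/2)^k := by
        have h2k : 2 ≤ k := hk
        have : x^k = x^2 * x^(k-2) := by
          rw [← pow_add]
          congr 1
          omega
        rw [this]
        have hxle : x^(k-2) ≤ (1/2:ℝ)^(k-2) := by
          apply pow_le_pow_left₀ (le_of_lt hxpos) hxhalf
        have hhalf : (1/2:ℝ)^(k-2) = 4 * (1/2)^k := by
          have := pow_sub_mul_pow (1/2:ℝ) h2k
          have h4 : ((1/2:ℝ))^2 = 1/4 := by norm_num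
          field_simp at this ⊢
          nlinarith [this]
        nlinarith [sq_nonneg x, hxpos]
      calc (∑ μ ∈ univ.filter (fun μ : Equiv.Perm (Fin n) => mc μ = k), ((Bad μ).card : ℝ))
          ≤ ∑ μ ∈ univ.filter (fun μ : Equiv.Perm (Fin n) => mc μ = k),
            (2:ℝ)^D * (q^n / (2 * (n:ℝ)^2))^k := hsum1
        _ = ((univ.filter (fun μ : Equiv.Perm (Fin n) => mc μ = k)).card : ℝ) *
            ((2:ℝ)^D * (q^n / (2 * (n:ℝ)^2))^k) := hsum2
        _ ≤ ((n:ℝ)^k * (n:ℝ)^k) * ((2:ℝ)^D * (q^n / (2 * (n:ℝ)^2))^k) := by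
            apply mul_le_mul_of_nonneg_right hcount (by positivity)
        _ = (2:ℝ)^D * (((n:ℝ)^k * (n:ℝ)^k) * (q^n / (2 * (n:ℝ)^2))^k) := by ring
        _ = (2:ℝ)^D * x^k := by rw [hxk]
        _ ≤ (2:ℝ)^D * (4 * x^2 * (1/2)^k) := by
            apply mul_le_mul_of_nonneg_left hxk_le (by positivity)
  -- sum the geometric series
  have htotal : (∑ μ : Equiv.Perm (Fin n), ((Bad μ).card : ℝ)) ≤ (2:ℝ)^D * (8 * x^2) := by
    rw [hfib]
    calc (∑ k ∈ range (n+1), ∑ μ ∈ univ.filter (fun μ : Equiv.Perm (Fin n) => mc μ = k),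
        ((Bad μ).card : ℝ))
        ≤ ∑ k ∈ range (n+1), (2:ℝ)^D * (4 * x^2 * (1/2)^k) :=
          Finset.sum_le_sum hfiber_bound
      _ = (2:ℝ)^D * (4 * x^2) * ∑ k ∈ range (n+1), (1/(2:ℝ))^k := by
          rw [Finset.mul_sum]
          apply Finset.sum_congr rfl
          intro k _; ring
      _ ≤ (2:ℝ)^D * (4 * x^2) * 2 := by
          apply mul_le_mul_of_nonneg_left (sum_geometric_two_le _) (by positivity)
      _ = (2:ℝ)^D * (8 * x^2) := by ring
  have hfinal : (2:ℝ)^D * (8 * x^2) ≤ q^n * (2:ℝ)^D := by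
    have h8 : 8 * x^2 ≤ q^n := by
      rw [hx]
      have : 8 * (q^n/2)^2 = 2 * (q^n * q^n) := by ring
      rw [this]
      nlinarith
    nlinarith [pow_pos (show (0:ℝ) < 2 by norm_num) D]
  have hexp : Real.exp (-(Real.log (1000/999)) * n) = q^n := by
    have h1 : -(Real.log (1000/999)) = Real.log q := by
      rw [← Real.log_inv]; norm_num [hq]
    rw [h1, show Real.log q * (n:ℝ) = (n:ℝ) * Real.log q by ring, Real.exp_nat_mul,
      Real.exp_log (by norm_num [hq])]
  have hpow : ((ND.powerset.card : ℕ) : ℝ) = (2:ℝ)^D := by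
    rw [Finset.card_powerset]
    push_cast
    rfl
  calc (((ND.powerset.filter (fun E => ¬ ∀ μ : Equiv.Perm (Fin n),
        ((n : ℝ) / 20) * ((univ.filter (fun i => μ i ≠ i)).card : ℝ) ≤
          ((symmDiff E (E.image (Sym2.map ⇑μ))).card : ℝ))).card : ℝ))
      ≤ ∑ μ : Equiv.Perm (Fin n), ((Bad μ).card : ℝ) := hcard1
    _ ≤ (2:ℝ)^D * (8 * x^2) := htotal
    _ ≤ q^n * (2:ℝ)^D := hfinal
    _ = Real.exp (-(Real.log (1000/999)) * n) * ((ND.powerset.card : ℕ) : ℝ) := by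
        rw [hexp, hpow]
end

section
/- Fix a permutation μ of [n] with non-fixed-point set T, and fix disjoint sets I ⊆ T and J ⊆ [n] with I ∩ μ(I) = ∅, μ(J) ∩ I = ∅, and J ∩ I = ∅. For a uniformly random graph G = ([n], E) (each pair independently an edge with probability 1/2), and for each (u,v) ∈ J × I, let χ_{u,v} be the indicator that exactly one of {u,v} and {μ(u), μ(v)} is an edge of G. Then each χ_{u,v} equals 1 with probability exactly 1/2, and the random variables {χ_{u,v} : (u,v) ∈ J × I} are mutually independent. -/
open Finset

open scoped Classical

/-- Fix a permutation `μ` of `[n]`, `I` a set of non-fixed-points with `I ∩ μ(I) = ∅`, and `J`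
disjoint from `I` with `μ(J) ∩ I = ∅`. For a uniformly random graph, the indicators
`χ_{u,v}` (for `(u,v) ∈ J × I`) that exactly one of `{u,v}`, `{μ(u),μ(v)}` is an edge are each
`1` with probability exactly `1/2` and are mutually independent: every outcome pattern `b` is
attained by exactly a `2^{-|J×I|}` fraction of all graphs. -/
theorem stmt10 (n : ℕ) (μ : Equiv.Perm (Fin n)) (I J : Finset (Fin n))
    (hIT : ∀ v ∈ I, μ v ≠ v)
    (hII : Disjoint I (I.image ⇑μ))
    (hJI : Disjoint (J.image ⇑μ) I)
    (hJI' : Disjoint J I) :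
    ∀ b : Fin n → Fin n → Bool,
      (((Finset.univ.filter (fun e : Sym2 (Fin n) => ¬ e.IsDiag)).powerset.filter
          (fun E => ∀ u ∈ J, ∀ v ∈ I,
            (Xor' (s(u, v) ∈ E) (s(μ u, μ v) ∈ E) ↔ b u v = true))).card)
          * 2 ^ (J.card * I.card)
        = (Finset.univ.filter (fun e : Sym2 (Fin n) => ¬ e.IsDiag)).powerset.card := by
  intro b
  set ND : Finset (Sym2 (Fin n)) := Finset.univ.filter (fun e : Sym2 (Fin n) => ¬ e.IsDiag)
    with hND
  set Ω : Finset (Finset (Sym2 (Fin n))) := ND.powerset with hΩ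
  set S : (Fin n → Fin n → Bool) → Finset (Finset (Sym2 (Fin n))) := fun c =>
    Ω.filter (fun E => ∀ u ∈ J, ∀ v ∈ I,
      (Xor' (s(u, v) ∈ E) (s(μ u, μ v) ∈ E) ↔ c u v = true)) with hS
  -- basic disjointness consequences
  have hJnotI : ∀ u ∈ J, u ∉ I := fun u hu => Finset.disjoint_left.1 hJI' hu
  have hμJnotI : ∀ u ∈ J, μ u ∉ I := fun u hu =>
    Finset.disjoint_left.1 hJI (Finset.mem_image_of_mem _ hu)
  have hμInotI : ∀ v ∈ I, μ v ∉ I := fun v hv h =>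
    Finset.disjoint_left.1 hII h (Finset.mem_image_of_mem _ hv)
  -- injectivity of (u,v) ↦ s(μ u, μ v) on J × I
  have hinj : ∀ u ∈ J, ∀ v ∈ I, ∀ u' ∈ J, ∀ v' ∈ I,
      s(μ u, μ v) = s(μ u', μ v') → u = u' ∧ v = v' := by
    intro u hu v hv u' hu' v' hv' h
    rw [Sym2.eq_iff] at h
    rcases h with ⟨h1, h2⟩ | ⟨h1, h2⟩
    · exact ⟨μ.injective h1, μ.injective h2⟩
    · exact absurd (μ.injective h1 ▸ hv') (hJnotI u hu)
  -- s(u,v) is never of the form s(μ u', μ v')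
  have hne : ∀ u ∈ J, ∀ v ∈ I, ∀ u' ∈ J, ∀ v' ∈ I, s(u, v) ≠ s(μ u', μ v') := by
    intro u hu v hv u' hu' v' hv' h
    rw [Sym2.eq_iff] at h
    rcases h with ⟨h1, h2⟩ | ⟨h1, h2⟩
    · exact hμInotI v' hv' (h2 ▸ hv)
    · exact hμJnotI u' hu' (h2 ▸ hv)
  have hxor : ∀ (P Q : Prop), Xor' P (¬ Q) ↔ ¬ Xor' P Q := by
    intro P Q; unfold Xor'; unfold Xor; tauto
  -- Step 1: all pattern classes have the same cardinality
  have hSS : ∀ c c' : Fin n → Fin n → Bool, (S c).card = (S c').card := by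
    intro c c'
    set D : Finset (Sym2 (Fin n)) :=
      ((J ×ˢ I).filter (fun p => c p.1 p.2 ≠ c' p.1 p.2)).image
        (fun p => s(μ p.1, μ p.2)) with hD
    have hDND : D ⊆ ND := by
      intro e he
      rw [hD] at he
      simp only [Finset.mem_image, Finset.mem_filter, Finset.mem_product] at he
      obtain ⟨⟨u, v⟩, ⟨⟨hu, hv⟩, -⟩, rfl⟩ := he
      simp only [hND, Finset.mem_filter, Finset.mem_univ, true_and, Sym2.mk_isDiag_iff]
      intro h
      exact hJnotI u hu (μ.injective h ▸ hv)
    have hmemD : ∀ u ∈ J, ∀ v ∈ I, (s(μ u, μ v) ∈ D ↔ c u v ≠ c' u v) := by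
      intro u hu v hv
      constructor
      · intro h
        rw [hD] at h
        simp only [Finset.mem_image, Finset.mem_filter, Finset.mem_product] at h
        obtain ⟨⟨u', v'⟩, ⟨⟨hu', hv'⟩, hcc⟩, heq⟩ := h
        obtain ⟨rfl, rfl⟩ := hinj u' hu' v' hv' u hu v hv heq
        exact hcc
      · intro h
        rw [hD]
        simp only [Finset.mem_image, Finset.mem_filter, Finset.mem_product]
        exact ⟨(u, v), ⟨⟨hu, hv⟩, h⟩, rfl⟩
    have hnotD : ∀ u ∈ J, ∀ v ∈ I, s(u, v) ∉ D := by
      intro u hu v hv h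
      rw [hD] at h
      simp only [Finset.mem_image, Finset.mem_filter, Finset.mem_product] at h
      obtain ⟨⟨u', v'⟩, ⟨⟨hu', hv'⟩, -⟩, heq⟩ := h
      exact hne u hu v hv u' hu' v' hv' heq.symm
    -- toggling map
    have hΩD : ∀ E ∈ Ω, symmDiff E D ∈ Ω := by
      intro E hE
      rw [hΩ, Finset.mem_powerset] at hE ⊢
      exact symmDiff_le_sup.trans (sup_le hE hDND)
    have key : ∀ (c₁ c₂ : Fin n → Fin n → Bool),
        (∀ u ∈ J, ∀ v ∈ I, (c₁ u v ≠ c₂ u v ↔ c u v ≠ c' u v)) →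
        ∀ E ∈ S c₁, symmDiff E D ∈ S c₂ := by
      intro c₁ c₂ hcc E hE
      rw [hS, Finset.mem_filter] at hE ⊢
      obtain ⟨hEΩ, hEc⟩ := hE
      refine ⟨hΩD E hEΩ, ?_⟩
      intro u hu v hv
      have h1 : s(u, v) ∈ symmDiff E D ↔ s(u, v) ∈ E := by
        rw [Finset.mem_symmDiff]
        have := hnotD u hu v hv
        tauto
      have hx := hEc u hu v hv
      by_cases hcuv : c₁ u v = c₂ u v
      · have hD' : s(μ u, μ v) ∉ D := by
          rw [hmemD u hu v hv]
          exact fun h => ((hcc u hu v hv).2 h) hcuv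
        have h2 : s(μ u, μ v) ∈ symmDiff E D ↔ s(μ u, μ v) ∈ E := by
          rw [Finset.mem_symmDiff]; tauto
        rw [h1, h2, ← hcuv]
        exact hx
      · have hD' : s(μ u, μ v) ∈ D := (hmemD u hu v hv).2 ((hcc u hu v hv).1 hcuv)
        have h2 : s(μ u, μ v) ∈ symmDiff E D ↔ ¬ (s(μ u, μ v) ∈ E) := by
          rw [Finset.mem_symmDiff]; tauto
        rw [h1, h2, hxor _ _, hx]
        cases hh : c₁ u v <;> cases hh2 : c₂ u v <;> rw [hh, hh2] at hcuv <;>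
          simp at hcuv ⊢
    have hcancel : ∀ E : Finset (Sym2 (Fin n)), symmDiff (symmDiff E D) D = E :=
      fun E => symmDiff_symmDiff_cancel_right D E
    refine Finset.card_bij' (fun E _ => symmDiff E D) (fun E _ => symmDiff E D)
      (key c c' (fun u hu v hv => Iff.rfl) ) (key c' c (fun u hu v hv => ne_comm))
      (fun E _ => hcancel E) (fun E _ => hcancel E)
  -- Step 2: partition Ω by pattern on J × I
  set pat : Finset (Sym2 (Fin n)) → ((J ×ˢ I : Finset (Fin n × Fin n)) → Bool) := fun E x =>
    decide (Xor' (s(x.1.1, x.1.2) ∈ E) (s(μ x.1.1, μ x.1.2) ∈ E)) with hpat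
  have hpart : Ω.card = ∑ p : ((J ×ˢ I : Finset (Fin n × Fin n)) → Bool),
      (Ω.filter (fun E => pat E = p)).card :=
    Finset.card_eq_sum_card_fiberwise (fun E _ => Finset.mem_univ _)
  have hfiber : ∀ p : ((J ×ˢ I : Finset (Fin n × Fin n)) → Bool),
      (Ω.filter (fun E => pat E = p)).card = (S b).card := by
    intro p
    rw [← hSS (fun u v => if h : (u, v) ∈ J ×ˢ I then p ⟨(u, v), h⟩ else true) b]
    congr 1
    apply Finset.filter_congr
    intro E hEΩ
    simp only [hpat]
    constructor
    · intro h u hu v hv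
      have hm : (u, v) ∈ J ×ˢ I := Finset.mem_product.2 ⟨hu, hv⟩
      have hth := congrFun h ⟨(u, v), hm⟩
      rw [dif_pos hm, ← hth]
      exact (decide_eq_true_iff).symm
    · intro h
      funext x
      obtain ⟨⟨u, v⟩, hm⟩ := x
      have hth := h u (Finset.mem_product.1 hm).1 v (Finset.mem_product.1 hm).2
      rw [dif_pos hm] at hth
      cases hp : p ⟨(u, v), hm⟩
      · rw [hp] at hth
        exact decide_eq_false (fun hx => by simpa using hth.1 hx)
      · rw [hp] at hth
        exact decide_eq_true (hth.2 rfl)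
    -- end filter_congr
  have hcardfun : Fintype.card ((J ×ˢ I : Finset (Fin n × Fin n)) → Bool)
      = 2 ^ (J.card * I.card) := by
    rw [Fintype.card_fun, Fintype.card_bool, Fintype.card_coe, Finset.card_product]
  calc (S b).card * 2 ^ (J.card * I.card)
      = ∑ _p : ((J ×ˢ I : Finset (Fin n × Fin n)) → Bool), (S b).card := by
        rw [Finset.sum_const, Finset.card_univ, hcardfun, smul_eq_mul, mul_comm]
    _ = ∑ p : ((J ×ˢ I : Finset (Fin n × Fin n)) → Bool),
        (Ω.filter (fun E => pat E = p)).card := by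
        exact Finset.sum_congr rfl (fun p _ => (hfiber p).symm)
    _ = Ω.card := hpart.symm
end

section
/- Let nmE : [N] × [N] → {0,1} be a non-malleable two-source (k, ε)-extractor and let T_0, T_1 ⊆ [N] with |T_0|, |T_1| ≥ 2^k and |T_σ ∪ μ_σ(T_σ)| ≤ N - 2 for σ ∈ {0,1}, where μ_0 : T_0 → [N] and μ_1 : T_1 → [N] are injections with no fixed points whose images avoid enough room to extend to derangements. Then |{(i,j) ∈ T_0 × T_1 : nmE(i,j) ≠ nmE(μ_0(i), μ_1(j))}| ≥ (0.5 - ε)·|T_0|·|T_1|. -/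
open Finset

/-- A probability mass function over `[N]` with min-entropy at least `k`. -/
def IsSource (k : ℕ) {N : ℕ} (μ : Fin N → ℝ) : Prop :=
  (∀ x, 0 ≤ μ x) ∧ (∑ x, μ x) = 1 ∧ ∀ x, μ x ≤ ((2 : ℝ) ^ k)⁻¹

/-- The joint distribution of `(nmE(X,Y), nmE(f(X), g(Y)))`. -/
noncomputable def jointDist {N : ℕ} (nmE : Fin N → Fin N → Bool)
    (f g : Fin N → Fin N) (μX μY : Fin N → ℝ) (a b : Bool) : ℝ :=
  ∑ x, ∑ y, μX x * μY y * (if nmE x y = a ∧ nmE (f x) (g y) = b then 1 else 0)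

/-- The distribution of `nmE(f(X), g(Y))`. -/
noncomputable def margDist {N : ℕ} (nmE : Fin N → Fin N → Bool)
    (f g : Fin N → Fin N) (μX μY : Fin N → ℝ) (b : Bool) : ℝ :=
  ∑ x, ∑ y, μX x * μY y * (if nmE (f x) (g y) = b then 1 else 0)

/-- Non-malleable two-source `(k, ε)`-extractor with one output bit. -/
def IsNMExtractor (ℓ k : ℕ) (ε : ℝ) (nmE : Fin (2 ^ ℓ) → Fin (2 ^ ℓ) → Bool) : Prop :=
  ∀ μX μY : Fin (2 ^ ℓ) → ℝ, IsSource k μX → IsSource k μY →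
    ∀ f g : Fin (2 ^ ℓ) → Fin (2 ^ ℓ), (∀ x, f x ≠ x) → (∀ y, g y ≠ y) →
      (1 / 2) * ∑ a : Bool, ∑ b : Bool,
        |jointDist nmE f g μX μY a b - (1 / 2) * margDist nmE f g μX μY b| ≤ ε

/-- The uniform distribution on a finset of size at least `2^k` is a `k`-source. -/
lemma isSource_uniform (k : ℕ) {N : ℕ} (T : Finset (Fin N)) (hT : 2 ^ k ≤ T.card) :
    IsSource k (fun x => if x ∈ T then ((T.card : ℝ))⁻¹ else 0) := by
  have hc : 0 < T.card := lt_of_lt_of_le (Nat.two_pow_pos k) hT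
  have hc' : (0 : ℝ) < (T.card : ℝ) := by exact_mod_cast hc
  refine ⟨fun x => ?_, ?_, fun x => ?_⟩
  · dsimp only
    split_ifs
    · positivity
    · exact le_refl 0
  · simp only
    rw [Finset.sum_ite_mem, Finset.univ_inter, Finset.sum_const, nsmul_eq_mul]
    field_simp
  · dsimp only
    split_ifs with h
    · apply inv_anti₀ (by positivity)
      exact_mod_cast hT
    · positivity

set_option maxHeartbeats 1000000 in
/-- For a non-malleable two-source `(k,ε)`-extractor `nmE`, sets `T₀, T₁ ⊆ [2^ℓ]` of size at
least `2^k`, and fixed-point-free injections `μ₀, μ₁` on them leaving room to extend to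
derangements (`|T_σ ∪ μ_σ(T_σ)| ≤ 2^ℓ - 2`), the number of pairs
`(i,j) ∈ T₀ × T₁` with `nmE(i,j) ≠ nmE(μ₀(i), μ₁(j))` is at least
`(0.5 - ε)·|T₀|·|T₁|`. -/
theorem stmt17 (ℓ k : ℕ) (ε : ℝ) (nmE : Fin (2 ^ ℓ) → Fin (2 ^ ℓ) → Bool)
    (hE : IsNMExtractor ℓ k ε nmE)
    (T0 T1 : Finset (Fin (2 ^ ℓ))) (h0 : 2 ^ k ≤ T0.card) (h1 : 2 ^ k ≤ T1.card)
    (μ0 μ1 : Fin (2 ^ ℓ) → Fin (2 ^ ℓ))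
    (hinj0 : Set.InjOn μ0 T0) (hinj1 : Set.InjOn μ1 T1)
    (hfix0 : ∀ i ∈ T0, μ0 i ≠ i) (hfix1 : ∀ j ∈ T1, μ1 j ≠ j)
    (hroom0 : (T0 ∪ T0.image μ0).card ≤ 2 ^ ℓ - 2)
    (hroom1 : (T1 ∪ T1.image μ1).card ≤ 2 ^ ℓ - 2) :
    (0.5 - ε) * (T0.card : ℝ) * (T1.card : ℝ) ≤
      (((T0 ×ˢ T1).filter (fun p => nmE p.1 p.2 ≠ nmE (μ0 p.1) (μ1 p.2))).card : ℝ) := by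
  classical
  have hc0 : 0 < T0.card := lt_of_lt_of_le (Nat.two_pow_pos k) h0
  have hc1 : 0 < T1.card := lt_of_lt_of_le (Nat.two_pow_pos k) h1
  have hc0' : (0 : ℝ) < (T0.card : ℝ) := by exact_mod_cast hc0
  have hc1' : (0 : ℝ) < (T1.card : ℝ) := by exact_mod_cast hc1
  -- N = 2^ℓ ≥ 3, so x + 1 ≠ x in Fin (2^ℓ)
  have hN : 3 ≤ 2 ^ ℓ := by
    have h1c : 1 ≤ (T0 ∪ T0.image μ0).card := by
      apply Finset.card_pos.mpr
      obtain ⟨x, hx⟩ := Finset.card_pos.mp hc0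
      exact ⟨x, Finset.mem_union_left _ hx⟩
    omega
  have hsucc : ∀ x : Fin (2 ^ ℓ), x + 1 ≠ x := by
    intro x h
    have h1 : (1 : Fin (2 ^ ℓ)) = 0 := by
      have h2 := congrArg (fun z => z - x) h
      simpa using h2
    have h2 := congrArg Fin.val h1
    rw [Fin.val_one', Fin.val_zero, Nat.mod_eq_of_lt (by omega)] at h2
    exact one_ne_zero h2
  -- extend μ0, μ1 to fixed-point-free functions
  set f : Fin (2 ^ ℓ) → Fin (2 ^ ℓ) := fun x => if x ∈ T0 then μ0 x else x + 1 with hf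
  set g : Fin (2 ^ ℓ) → Fin (2 ^ ℓ) := fun y => if y ∈ T1 then μ1 y else y + 1 with hg
  have hfne : ∀ x, f x ≠ x := by
    intro x; rw [hf]; dsimp only; split_ifs with h
    · exact hfix0 x h
    · exact hsucc x
  have hgne : ∀ y, g y ≠ y := by
    intro y; rw [hg]; dsimp only; split_ifs with h
    · exact hfix1 y h
    · exact hsucc y
  -- uniform sources
  set μX : Fin (2 ^ ℓ) → ℝ := fun x => if x ∈ T0 then ((T0.card : ℝ))⁻¹ else 0 with hμX
  set μY : Fin (2 ^ ℓ) → ℝ := fun y => if y ∈ T1 then ((T1.card : ℝ))⁻¹ else 0 with hμY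
  have hsX : IsSource k μX := isSource_uniform k T0 h0
  have hsY : IsSource k μY := isSource_uniform k T1 h1
  have hεb := hE μX μY hsX hsY f g hfne hgne
  -- abbreviations
  set J : Bool → Bool → ℝ := fun a b => jointDist nmE f g μX μY a b with hJ
  set M : Bool → ℝ := fun b => margDist nmE f g μX μY b with hM
  -- total mass is 1
  have htot : ∑ x, ∑ y, μX x * μY y = 1 := by
    have h' : ∑ x, ∑ y, μX x * μY y = (∑ x, μX x) * (∑ y, μY y) := by
      rw [Finset.sum_mul]
      exact Finset.sum_congr rfl fun x _ => by rw [Finset.mul_sum]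
    rw [h', hsX.2.1, hsY.2.1, mul_one]
  -- marginals sum to 1
  have hMsum : M true + M false = 1 := by
    have h' : M true + M false = ∑ x, ∑ y, μX x * μY y := by
      rw [hM]; dsimp only
      unfold margDist
      rw [← Finset.sum_add_distrib]
      refine Finset.sum_congr rfl fun x _ => ?_
      rw [← Finset.sum_add_distrib]
      refine Finset.sum_congr rfl fun y _ => ?_
      cases h : nmE (f x) (g y) <;> simp [h]
    rw [h', htot]
  -- joint sums to marginal
  have hJM : ∀ b, J true b + J false b = M b := by
    intro b
    rw [hJ, hM]; dsimp only
    unfold jointDist margDist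
    rw [← Finset.sum_add_distrib]
    refine Finset.sum_congr rfl fun x _ => ?_
    rw [← Finset.sum_add_distrib]
    refine Finset.sum_congr rfl fun y _ => ?_
    cases h : nmE x y <;> simp [h]
  -- probability of disagreement
  set P : ℝ := ∑ x, ∑ y, μX x * μY y *
      (if nmE x y ≠ nmE (f x) (g y) then 1 else 0) with hP
  have hPQ : P + (J true true + J false false) = 1 := by
    have h' : P + (J true true + J false false) = ∑ x, ∑ y, μX x * μY y := by
      rw [hP, hJ]; dsimp only
      unfold jointDist
      rw [← Finset.sum_add_distrib, ← Finset.sum_add_distrib]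
      refine Finset.sum_congr rfl fun x _ => ?_
      rw [← Finset.sum_add_distrib, ← Finset.sum_add_distrib]
      refine Finset.sum_congr rfl fun y _ => ?_
      cases h : nmE x y <;> cases h2 : nmE (f x) (g y) <;> simp [h, h2]
    rw [h', htot]
  -- from the extractor property, P ≥ 1/2 - ε
  have hPge : 1 / 2 - ε ≤ P := by
    have hsum : (1 / 2 : ℝ) * (|J true true - (1/2) * M true| + |J true false - (1/2) * M false|
        + (|J false true - (1/2) * M true| + |J false false - (1/2) * M false|)) ≤ ε := by
      simpa [Fintype.sum_bool, hJ, hM] using hεb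
    have h1 : J false true - (1/2) * M true = -(J true true - (1/2) * M true) := by
      have := hJM true; linarith
    have h2 : J true false - (1/2) * M false = -(J false false - (1/2) * M false) := by
      have := hJM false; linarith
    rw [h1, h2, abs_neg, abs_neg] at hsum
    have ha := le_abs_self (J true true - (1/2) * M true)
    have hb := le_abs_self (J false false - (1/2) * M false)
    linarith [hMsum, hPQ]
  -- counting: rewrite the goal cardinality as a double sum
  rw [show (0.5 : ℝ) = 1 / 2 from by norm_num, Finset.card_filter]
  push_cast
  rw [Finset.sum_product]
  have hz0 : ∀ x ∈ (Finset.univ : Finset (Fin (2 ^ ℓ))), x ∉ T0 →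
      (∑ y, μX x * μY y * (if nmE x y ≠ nmE (f x) (g y) then (1:ℝ) else 0)) = 0 := by
    intro x _ hx
    have hx0 : μX x = 0 := by rw [hμX]; exact if_neg hx
    simp [hx0]
  have hz1 : ∀ x, ∀ y ∈ (Finset.univ : Finset (Fin (2 ^ ℓ))), y ∉ T1 →
      μX x * μY y * (if nmE x y ≠ nmE (f x) (g y) then (1:ℝ) else 0) = 0 := by
    intro x y _ hy
    have hy0 : μY y = 0 := by rw [hμY]; exact if_neg hy
    simp [hy0]
  have hPsum : P = ∑ x ∈ T0, ∑ y ∈ T1,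
      ((T0.card : ℝ))⁻¹ * ((T1.card : ℝ))⁻¹ *
        (if nmE x y ≠ nmE (μ0 x) (μ1 y) then (1:ℝ) else 0) := by
    rw [hP, ← Finset.sum_subset (Finset.subset_univ T0) hz0]
    refine Finset.sum_congr rfl fun x hx => ?_
    rw [← Finset.sum_subset (Finset.subset_univ T1) (hz1 x)]
    refine Finset.sum_congr rfl fun y hy => ?_
    have hx' : μX x = ((T0.card : ℝ))⁻¹ := by rw [hμX]; exact if_pos hx
    have hy' : μY y = ((T1.card : ℝ))⁻¹ := by rw [hμY]; exact if_pos hy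
    have hfx : f x = μ0 x := by rw [hf]; exact if_pos hx
    have hgy : g y = μ1 y := by rw [hg]; exact if_pos hy
    rw [hx', hy', hfx, hgy]
  have hS : ∑ x ∈ T0, ∑ y ∈ T1, (if nmE x y ≠ nmE (μ0 x) (μ1 y) then (1:ℝ) else 0)
      = (T0.card : ℝ) * (T1.card : ℝ) * P := by
    rw [hPsum, Finset.mul_sum]
    refine Finset.sum_congr rfl fun x hx => ?_
    rw [Finset.mul_sum]
    refine Finset.sum_congr rfl fun y hy => ?_
    have e : (T0.card : ℝ) * (T1.card : ℝ) * (((T0.card : ℝ))⁻¹ * ((T1.card : ℝ))⁻¹) = 1 := by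
      rw [mul_mul_mul_comm, mul_inv_cancel₀ hc0'.ne', mul_inv_cancel₀ hc1'.ne', one_mul]
    rw [← mul_assoc, e, one_mul]
  rw [hS]
  have step : (1 / 2 - ε) * (T1.card : ℝ) * (T0.card : ℝ) ≤ P * (T1.card : ℝ) * (T0.card : ℝ) :=
    mul_le_mul_of_nonneg_right (mul_le_mul_of_nonneg_right hPge hc1'.le) hc0'.le
  nlinarith [step]
end

section
/- Let Φ ⊆ {0,1}^n be a set of strings, let G_n = ([n], E_n) be a fixed asymmetric graph of maximum degree d-2 with no isolated vertices, and for s ∈ {0,1}^n define G'_s = ([3n], E'_s) with E'_s = E_n ∪ {{i, n+i}, {i, 2n+i} : i ∈ [n]} ∪ {{n+i, 2n+i} : s_i = 1}. Then for s, r ∈ {0,1}^n, the graphs G'_s and G'_r are isomorphic if and only if s = r. -/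
open Finset

/-- The graph `G'_w` on `[3n]` (vertices `Fin n ⊕ Fin n ⊕ Fin n`): a copy of `E_n` on the
first block, edges `{i, n+i}` and `{i, 2n+i}`, and the edge `{n+i, 2n+i}` iff `w_i = 1`. -/
def Gstring (n : ℕ) (En : Finset (Sym2 (Fin n))) (w : Fin n → Bool) :
    Finset (Sym2 (Fin n ⊕ Fin n ⊕ Fin n)) :=
  En.image (Sym2.map (Sum.inl : Fin n → Fin n ⊕ Fin n ⊕ Fin n))
  ∪ Finset.univ.image (fun i : Fin n =>
      s((Sum.inl i : Fin n ⊕ Fin n ⊕ Fin n), Sum.inr (Sum.inl i)))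
  ∪ Finset.univ.image (fun i : Fin n =>
      s((Sum.inl i : Fin n ⊕ Fin n ⊕ Fin n), Sum.inr (Sum.inr i)))
  ∪ (Finset.univ.filter (fun i : Fin n => w i = true)).image (fun i : Fin n =>
      s((Sum.inr (Sum.inl i) : Fin n ⊕ Fin n ⊕ Fin n), Sum.inr (Sum.inr i)))

variable {n : ℕ} {En : Finset (Sym2 (Fin n))} {w : Fin n → Bool}

abbrev V (n : ℕ) := Fin n ⊕ Fin n ⊕ Fin n

lemma adj_ll (i j : Fin n) : s((Sum.inl i : V n), Sum.inl j) ∈ Gstring n En w ↔ s(i,j) ∈ En := by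
  constructor
  · intro h
    simp only [Gstring, mem_union, mem_image, mem_filter] at h
    rcases h with ((⟨e,he,hmap⟩|⟨k,_,hk⟩)|⟨k,_,hk⟩)|⟨k,_,hk⟩
    · induction e using Sym2.inductionOn with
      | hf a b =>
        rw [Sym2.map_pair_eq, Sym2.eq_iff] at hmap
        rcases hmap with ⟨h1,h2⟩|⟨h1,h2⟩ <;> simp_all [Sym2.eq_swap]
    all_goals (rw [Sym2.eq_iff] at hk; aesop)
  · intro h
    simp only [Gstring, mem_union, mem_image]
    exact Or.inl (Or.inl (Or.inl ⟨_, h, by rw [Sym2.map_pair_eq]⟩))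

lemma adj_l_rl (i j : Fin n) : s((Sum.inl i : V n), Sum.inr (Sum.inl j)) ∈ Gstring n En w ↔ i = j := by
  constructor
  · intro h
    simp only [Gstring, mem_union, mem_image, mem_filter] at h
    rcases h with ((⟨e,he,hmap⟩|⟨k,_,hk⟩)|⟨k,_,hk⟩)|⟨k,_,hk⟩
    · induction e using Sym2.inductionOn with
      | hf a b => rw [Sym2.map_pair_eq, Sym2.eq_iff] at hmap; simp_all
    all_goals (rw [Sym2.eq_iff] at hk; aesop)
  · rintro rfl
    simp only [Gstring, mem_union, mem_image]
    exact Or.inl (Or.inl (Or.inr ⟨i, mem_univ i, rfl⟩))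

lemma adj_l_rr (i j : Fin n) : s((Sum.inl i : V n), Sum.inr (Sum.inr j)) ∈ Gstring n En w ↔ i = j := by
  constructor
  · intro h
    simp only [Gstring, mem_union, mem_image, mem_filter] at h
    rcases h with ((⟨e,he,hmap⟩|⟨k,_,hk⟩)|⟨k,_,hk⟩)|⟨k,_,hk⟩
    · induction e using Sym2.inductionOn with
      | hf a b => rw [Sym2.map_pair_eq, Sym2.eq_iff] at hmap; simp_all
    all_goals (rw [Sym2.eq_iff] at hk; aesop)
  · rintro rfl
    simp only [Gstring, mem_union, mem_image]
    exact Or.inl (Or.inr ⟨i, mem_univ i, rfl⟩)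

lemma adj_rl_rr (i j : Fin n) : s((Sum.inr (Sum.inl i) : V n), Sum.inr (Sum.inr j)) ∈ Gstring n En w ↔ (i = j ∧ w i = true) := by
  constructor
  · intro h
    simp only [Gstring, mem_union, mem_image, mem_filter] at h
    rcases h with ((⟨e,he,hmap⟩|⟨k,_,hk⟩)|⟨k,_,hk⟩)|⟨k,⟨_,hw⟩,hk⟩
    · induction e using Sym2.inductionOn with
      | hf a b => rw [Sym2.map_pair_eq, Sym2.eq_iff] at hmap; simp_all
    all_goals (rw [Sym2.eq_iff] at hk; aesop)
  · rintro ⟨rfl, hw⟩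
    simp only [Gstring, mem_union, mem_image, mem_filter]
    exact Or.inr ⟨i, ⟨mem_univ i, hw⟩, rfl⟩

lemma not_adj_rl_rl (i j : Fin n) : s((Sum.inr (Sum.inl i) : V n), Sum.inr (Sum.inl j)) ∉ Gstring n En w := by
  intro h
  simp only [Gstring, mem_union, mem_image, mem_filter] at h
  rcases h with ((⟨e,he,hmap⟩|⟨k,_,hk⟩)|⟨k,_,hk⟩)|⟨k,_,hk⟩
  · induction e using Sym2.inductionOn with
    | hf a b => rw [Sym2.map_pair_eq, Sym2.eq_iff] at hmap; simp_all
  all_goals (rw [Sym2.eq_iff] at hk; aesop)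

lemma not_adj_rr_rr (i j : Fin n) : s((Sum.inr (Sum.inr i) : V n), Sum.inr (Sum.inr j)) ∉ Gstring n En w := by
  intro h
  simp only [Gstring, mem_union, mem_image, mem_filter] at h
  rcases h with ((⟨e,he,hmap⟩|⟨k,_,hk⟩)|⟨k,_,hk⟩)|⟨k,_,hk⟩
  · induction e using Sym2.inductionOn with
    | hf a b => rw [Sym2.map_pair_eq, Sym2.eq_iff] at hmap; simp_all
  all_goals (rw [Sym2.eq_iff] at hk; aesop)

/-- For a fixed asymmetric graph `G_n` of maximum degree `d - 2` with no isolated vertices,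
the graphs `G'_w` and `G'_r` are isomorphic if and only if `w = r`. -/
theorem stmt18 (n d : ℕ)
    (En : Finset (Sym2 (Fin n)))
    (hsimple : ∀ e ∈ En, ¬ e.IsDiag)
    (hasym : ∀ π : Equiv.Perm (Fin n), En.image (Sym2.map ⇑π) = En → π = 1)
    (hdeg : ∀ v : Fin n, (En.filter (fun e => v ∈ e)).card ≤ d - 2)
    (hnoiso : ∀ v : Fin n, 0 < (En.filter (fun e => v ∈ e)).card)
    (w r : Fin n → Bool) :
    (∃ π : Equiv.Perm (Fin n ⊕ Fin n ⊕ Fin n),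
        (Gstring n En w).image (Sym2.map ⇑π) = Gstring n En r) ↔ w = r := by
  constructor
  · rintro ⟨π, h⟩
    -- transport of adjacency
    have hmem : ∀ u v : V n, s(u, v) ∈ Gstring n En w ↔
        s(π u, π v) ∈ Gstring n En r := by
      intro u v
      rw [← h]
      constructor
      · intro hm
        have := mem_image_of_mem (Sym2.map ⇑π) hm
        rwa [Sym2.map_pair_eq] at this
      · intro hm
        obtain ⟨e, he, heq⟩ := mem_image.mp hm
        rw [← Sym2.map_pair_eq] at heq
        rwa [← Sym2.map.injective π.injective heq]
    -- neighbors of a second/third block vertex in any Gstring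
    have hnbr : ∀ (r' : Fin n → Bool) (x : Fin n ⊕ Fin n) (u : V n),
        s(u, Sum.inr x) ∈ Gstring n En r' →
        u = Sum.inl (x.elim id id) ∨
        u = Sum.inr (x.elim (fun k => Sum.inr k) (fun k => Sum.inl k)) := by
      intro r' x u hu
      rcases x with k | k
      · rcases u with a | a | a
        · left; rw [adj_l_rl] at hu; simp [hu]
        · exact absurd hu (not_adj_rl_rl a k)
        · right; rw [Sym2.eq_swap] at hu; rw [adj_rl_rr] at hu; simp [hu.1]
      · rcases u with a | a | a
        · left; rw [adj_l_rr] at hu; simp [hu]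
        · right; rw [adj_rl_rr] at hu; simp [hu.1]
        · exact absurd hu (not_adj_rr_rr a k)
    -- π maps the first block into the first block
    have hinl : ∀ i : Fin n, ∃ j : Fin n, π (Sum.inl i) = Sum.inl j := by
      intro i
      obtain ⟨e, hei⟩ := Finset.card_pos.mp (hnoiso i)
      rw [mem_filter] at hei
      obtain ⟨j, rfl⟩ := Sym2.mem_iff_exists.mp hei.2
      have hij : i ≠ j := fun hd => hsimple _ hei.1 (Sym2.mk_isDiag_iff.mpr hd)
      rcases hx : π (Sum.inl i) with t | x
      · exact ⟨t, rfl⟩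
      exfalso
      -- three distinct neighbors of inl i
      set a : V n := Sum.inl j with ha
      set b : V n := Sum.inr (Sum.inl i) with hb
      set c : V n := Sum.inr (Sum.inr i) with hc
      have hadja : s((Sum.inl i : V n), a) ∈ Gstring n En w := (adj_ll i j).mpr hei.1
      have hadjb : s((Sum.inl i : V n), b) ∈ Gstring n En w := (adj_l_rl i i).mpr rfl
      have hadjc : s((Sum.inl i : V n), c) ∈ Gstring n En w := (adj_l_rr i i).mpr rfl
      have h1 := (hmem _ _).mp hadja
      have h2 := (hmem _ _).mp hadjb
      have h3 := (hmem _ _).mp hadjc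
      rw [hx, Sym2.eq_swap] at h1 h2 h3
      have k1 := hnbr r x _ h1
      have k2 := hnbr r x _ h2
      have k3 := hnbr r x _ h3
      have hab : a ≠ b := by simp [ha, hb]
      have hac : a ≠ c := by simp [ha, hc]
      have hbc : b ≠ c := by simp [hb, hc]
      rcases k1 with k1 | k1 <;> rcases k2 with k2 | k2 <;> rcases k3 with k3 | k3
      all_goals first
        | exact hab (π.injective (k1.trans k2.symm))
        | exact hac (π.injective (k1.trans k3.symm))
        | exact hbc (π.injective (k2.trans k3.symm))
    -- the induced permutation on the first block
    choose f hf using hinl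
    have hfinj : Function.Injective f := by
      intro i j hij
      have : π (Sum.inl i) = π (Sum.inl j) := by rw [hf, hf, hij]
      exact Sum.inl_injective (π.injective this)
    let σ : Equiv.Perm (Fin n) := Equiv.ofBijective f (Finite.injective_iff_bijective.mp hfinj)
    have hσ : σ = 1 := by
      apply hasym
      apply Finset.eq_of_subset_of_card_le
      · intro e he
        obtain ⟨e', he', rfl⟩ := mem_image.mp he
        induction e' using Sym2.inductionOn with
        | hf u v =>
          have := (hmem (Sum.inl u) (Sum.inl v)).mp ((adj_ll u v).mpr he')
          rw [hf, hf] at this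
          rw [Sym2.map_pair_eq]
          exact (adj_ll _ _).mp this
      · rw [Finset.card_image_of_injective _ (Sym2.map.injective σ.injective)]
    have hfix : ∀ i : Fin n, π (Sum.inl i) = Sum.inl i := by
      intro i
      rw [hf i]
      have : σ i = i := by rw [hσ]; rfl
      have : f i = i := this
      rw [this]
    -- π maps the 2nd/3rd blocks to the 2nd/3rd blocks
    have hinr : ∀ x : Fin n ⊕ Fin n, ∃ y, π (Sum.inr x) = Sum.inr y := by
      intro x
      rcases hx : π (Sum.inr x) with j | y
      · exfalso
        have := π.injective ((hfix j).trans hx.symm)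
        simp at this
      · exact ⟨y, rfl⟩
    -- the pair {n+i, 2n+i} is preserved
    have hpair : ∀ i : Fin n,
        (π (Sum.inr (Sum.inl i)) = Sum.inr (Sum.inl i) ∨
         π (Sum.inr (Sum.inl i)) = Sum.inr (Sum.inr i)) ∧
        (π (Sum.inr (Sum.inr i)) = Sum.inr (Sum.inl i) ∨
         π (Sum.inr (Sum.inr i)) = Sum.inr (Sum.inr i)) := by
      intro i
      constructor
      · have hadj := (hmem (Sum.inl i) (Sum.inr (Sum.inl i))).mp ((adj_l_rl i i).mpr rfl)
        rw [hfix i] at hadj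
        obtain ⟨y, hy⟩ := hinr (Sum.inl i)
        rw [hy] at hadj ⊢
        rcases y with k | k
        · left; rw [adj_l_rl] at hadj; rw [hadj]
        · right; rw [adj_l_rr] at hadj; rw [hadj]
      · have hadj := (hmem (Sum.inl i) (Sum.inr (Sum.inr i))).mp ((adj_l_rr i i).mpr rfl)
        rw [hfix i] at hadj
        obtain ⟨y, hy⟩ := hinr (Sum.inr i)
        rw [hy] at hadj ⊢
        rcases y with k | k
        · left; rw [adj_l_rl] at hadj; rw [hadj]
        · right; rw [adj_l_rr] at hadj; rw [hadj]
    funext i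
    rw [Bool.eq_iff_iff]
    have key := hmem (Sum.inr (Sum.inl i)) (Sum.inr (Sum.inr i))
    rw [adj_rl_rr] at key
    obtain ⟨hp1, hp2⟩ := hpair i
    have hne : π (Sum.inr (Sum.inl i)) ≠ π (Sum.inr (Sum.inr i)) := by
      intro hc
      have := π.injective hc
      simp at this
    rcases hp1 with hp1 | hp1 <;> rcases hp2 with hp2 | hp2
    · rw [hp1] at hne; rw [hp2] at hne; exact absurd rfl hne
    · rw [hp1, hp2, adj_rl_rr] at key
      constructor
      · intro hw; exact ((key.mp ⟨rfl, hw⟩)).2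
      · intro hr; exact (key.mpr ⟨rfl, hr⟩).2
    · rw [hp1, hp2, Sym2.eq_swap, adj_rl_rr] at key
      constructor
      · intro hw; exact ((key.mp ⟨rfl, hw⟩)).2
      · intro hr; exact (key.mpr ⟨rfl, hr⟩).2
    · rw [hp1] at hne; rw [hp2] at hne; exact absurd rfl hne
  · rintro rfl
    refine ⟨1, ?_⟩
    simp [Sym2.map_id']
end
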